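/- Let $p$ be a prime and $m \geq 1$ an integer. Let $(a_1, \ldots, a_m) \in (\mathbb{Z}_p)^m$ be a fixed vector such that $a_1 + \cdots + a_m = 0$ in $\mathbb{Z}_p$ and $a_m \neq 0$ in $\mathbb{Z}_p$. Let $\mathcal{F} \subseteq (\mathbb{Z}_p)^n$ be a subset with the property: whenever $b_1, \ldots, b_m \in \mathcal{F}$ are vectors such that $b_i \neq b_j$ for some $1 \leq i < j \leq m$, then $\sum_{i=1}^m a_i b_i \neq 0$. Then $|\mathcal{F}| \leq m \cdot \#\{\alpha \in \{0, \ldots, p-1\}^n : \sum_{i=1}^n \alpha_i \leq \frac{n(p-1)}{m}\}$. -/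

import Mathlib

open Finset

lemma exists_large_support {K Y : Type*} [Field K] [DecidableEq K] [Fintype Y] [DecidableEq Y]
    (W : Submodule K (Y → K)) :
    ∃ h ∈ W, Module.finrank K W ≤ (Finset.univ.filter fun y => h y ≠ 0).card := by
  classical
  have huniv : ∀ w ∈ W, (∀ y ∈ (Finset.univ : Finset Y), w y = 0) → w = 0 := by
    intro w hw hv
    funext y; exact hv y (mem_univ y)
  obtain ⟨A, hAmem, hAmin⟩ := Finset.exists_min_image
    (Finset.univ.powerset.filter (fun A => ∀ w ∈ W, (∀ y ∈ A, w y = 0) → w = 0))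
    Finset.card ⟨Finset.univ, Finset.mem_filter.mpr ⟨by simp, huniv⟩⟩
  have hA : ∀ w ∈ W, (∀ y ∈ A, w y = 0) → w = 0 := (Finset.mem_filter.mp hAmem).2
  -- for each y ∈ A a witness
  have hw : ∀ y ∈ A, ∃ w ∈ W, (∀ y' ∈ A.erase y, w y' = 0) ∧ w y ≠ 0 := by
    intro y hy
    have hnot : ¬ (∀ w ∈ W, (∀ y' ∈ A.erase y, w y' = 0) → w = 0) := by
      intro hDe
      have : A.card ≤ (A.erase y).card :=
        hAmin _ (Finset.mem_filter.mpr ⟨Finset.mem_powerset.mpr (Finset.subset_univ _), hDe⟩)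
      have := Finset.card_erase_lt_of_mem hy
      omega
    push_neg at hnot
    obtain ⟨w, hwW, hv, hne⟩ := hnot
    refine ⟨w, hwW, hv, fun hy0 => hne ?_⟩
    apply hA w hwW
    intro y' hy'
    rcases eq_or_ne y' y with rfl | hne'
    · exact hy0
    · exact hv y' (Finset.mem_erase.mpr ⟨hne', hy'⟩)
  choose! w hwW hwv hwne using hw
  set h : Y → K := ∑ y ∈ A, (w y y)⁻¹ • w y with hh
  have hhW : h ∈ W := Submodule.sum_mem _ fun y hy => Submodule.smul_mem _ _ (hwW y hy)
  have hhval : ∀ y ∈ A, h y = 1 := by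
    intro y hy
    rw [hh]
    rw [Finset.sum_apply]
    rw [Finset.sum_eq_single_of_mem y hy]
    · simp [inv_mul_cancel₀ (hwne y hy)]
    · intro y' hy' hne'
      have := hwv y' hy' y (Finset.mem_erase.mpr ⟨(Ne.symm hne'), hy⟩)
      simp [this]
  refine ⟨h, hhW, ?_⟩
  have h1 : A ⊆ Finset.univ.filter fun y => h y ≠ 0 := by
    intro y hy
    simp only [Finset.mem_filter, Finset.mem_univ, true_and]
    rw [hhval y hy]; exact one_ne_zero
  have h2 : Module.finrank K W ≤ A.card := by
    let ρ : W →ₗ[K] (A → K) :=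
      { toFun := fun v => fun y => (v : Y → K) y
        map_add' := by intros; rfl
        map_smul' := by intros; rfl }
    have hinj : Function.Injective ρ := by
      intro v v' hvv
      have hz : ((v - v' : W) : Y → K) ∈ W := (v - v').2
      have : ((v - v' : W) : Y → K) = 0 := by
        apply hA _ hz
        intro y hy
        have := congrFun hvv ⟨y, hy⟩
        simpa [ρ, sub_eq_zero] using congrArg (fun f => f - (v' : Y → K) y) this
      have h0 : v - v' = 0 := by
        apply Subtype.ext; simpa using this
      rwa [sub_eq_zero] at h0
    calc Module.finrank K W ≤ Module.finrank K (A → K) :=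
          LinearMap.finrank_le_finrank_of_injective hinj
      _ = A.card := by rw [Module.finrank_fintype_fun_eq_card]; exact Fintype.card_coe A
  exact h2.trans (Finset.card_le_card h1)

lemma slice_rank_diag {K X : Type*} [Field K] [DecidableEq K] [Fintype X] [DecidableEq X]
    [Nonempty X]
    {ι : Type*} [DecidableEq ι] (m : ℕ) (hm : 2 ≤ m) (s : Finset ι) (idx : ι → Fin m)
    (f : ι → X → K) (g : ι → (Fin m → X) → K)
    (hg : ∀ t ∈ s, ∀ x y : Fin m → X, (∀ j, j ≠ idx t → x j = y j) → g t x = g t y)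
    (T : (Fin m → X) → K)
    (hT : ∀ b, T b = ∑ t ∈ s, f t (b (idx t)) * g t b)
    (S : Finset X)
    (hdiag : ∀ x ∈ S, T (fun _ => x) ≠ 0)
    (hoff : ∀ b, (∃ i j, b i ≠ b j) → T b = 0) :
    S.card ≤ s.card := by
  classical
  induction m, hm using Nat.le_induction generalizing s f S with
  | base =>
    rcases S.eq_empty_or_nonempty with rfl | hS
    · simp
    set z₀ : X := Classical.arbitrary X with hz₀
    have fin2 : ∀ j : Fin 2, j ≠ 0 → j = 1 := by decide
    set s₀ := s.filter (fun t => idx t = 0) with hs₀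
    set s₁ := s.filter (fun t => ¬ idx t = 0) with hs₁
    have hidx1 : ∀ t ∈ s₁, idx t = 1 := fun t ht => fin2 _ (Finset.mem_filter.mp ht).2
    set Φ : (↥S → K) →ₗ[K] (↥s₁ → K) :=
      { toFun := fun w t => ∑ z, w z * f ↑t ↑z
        map_add' := fun u v => by funext t; simp [add_mul, Finset.sum_add_distrib]
        map_smul' := fun c u => by funext t; simp [Finset.mul_sum, mul_assoc] } with hΦ
    have hrank : S.card ≤ Module.finrank K (LinearMap.ker Φ) + s₁.card := by
      have h1 := LinearMap.finrank_range_add_finrank_ker Φ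
      have h2 : Module.finrank K (LinearMap.range Φ) ≤ s₁.card := by
        calc Module.finrank K (LinearMap.range Φ) ≤ Module.finrank K (↥s₁ → K) :=
              Submodule.finrank_le _
          _ = s₁.card := by rw [Module.finrank_fintype_fun_eq_card, Fintype.card_coe]
      have h3 : Module.finrank K (↥S → K) = S.card := by
        rw [Module.finrank_fintype_fun_eq_card, Fintype.card_coe]
      omega
    set Ψ : (↥S → K) →ₗ[K] (X → K) :=
      { toFun := fun w x => ∑ z : ↥S, T ![x, ↑z] * w z
        map_add' := fun u v => by funext x; simp [mul_add, Finset.sum_add_distrib]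
        map_smul' := fun c u => by
          funext x
          simp only [Pi.smul_apply, smul_eq_mul, RingHom.id_apply, Finset.mul_sum]
          exact Finset.sum_congr rfl fun z _ => by ring } with hΨ
    set V := Submodule.span K ((s₀.image f : Finset (X → K)) : Set (X → K)) with hV
    have hmem : ∀ w ∈ LinearMap.ker Φ, Ψ w ∈ V := by
      intro w hw
      have hcomp : Ψ w = ∑ t ∈ s₀.attach, (∑ z : ↥S, g (↑t) ![z₀, ↑z] * w z) • f ↑t := by
        funext x
        have step1 : Ψ w x = ∑ t ∈ s, ∑ z : ↥S, f t (![x, ↑z] (idx t)) * g t ![x, ↑z] * w z := by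
          show (∑ z : ↥S, T ![x, ↑z] * w z) = _
          rw [Finset.sum_comm]
          exact Finset.sum_congr rfl fun z _ => by rw [hT, Finset.sum_mul]
        rw [step1, ← Finset.sum_filter_add_sum_filter_not s (fun t => idx t = 0)]
        have e0 : ∑ t ∈ s₀, ∑ z : ↥S, f t (![x, ↑z] (idx t)) * g t ![x, ↑z] * w z
            = ∑ t ∈ s₀.attach, ∑ z : ↥S, g (↑t) ![z₀, ↑z] * w z * f (↑t) x := by
          rw [← Finset.sum_attach s₀ (fun t => ∑ z : ↥S, f t (![x, ↑z] (idx t)) * g t ![x, ↑z] * w z)]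
          apply Finset.sum_congr rfl
          rintro ⟨t, ht⟩ -
          have hidx : idx t = 0 := (Finset.mem_filter.mp ht).2
          have hts : t ∈ s := (Finset.mem_filter.mp ht).1
          apply Finset.sum_congr rfl
          intro z _
          have hgz : g t ![x, ↑z] = g t ![z₀, ↑z] := by
            apply hg t hts
            intro j hj
            rw [hidx] at hj
            rw [fin2 j hj]
            simp
          rw [hidx, hgz]
          simp only [Matrix.cons_val_zero]
          ring
        have e1 : ∑ t ∈ s₁, ∑ z : ↥S, f t (![x, ↑z] (idx t)) * g t ![x, ↑z] * w z = 0 := by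
          apply Finset.sum_eq_zero
          intro t ht
          have hidx := hidx1 t ht
          have hts : t ∈ s := (Finset.mem_filter.mp ht).1
          have e2 : ∑ z : ↥S, f t (![x, ↑z] (idx t)) * g t ![x, ↑z] * w z
              = g t ![x, z₀] * ∑ z : ↥S, w z * f t ↑z := by
            rw [Finset.mul_sum]
            apply Finset.sum_congr rfl
            intro z _
            have hgz : g t ![x, ↑z] = g t ![x, z₀] := by
              apply hg t hts
              intro j hj
              rw [hidx] at hj
              have : j = 0 := by
                rcases eq_or_ne j 0 with h | h
                · exact h
                · exact absurd (fin2 j h) hj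
              rw [this]; simp
            rw [hidx, hgz]
            simp only [Matrix.cons_val_one, Matrix.head_cons, Matrix.cons_val_zero]
            ring
          rw [e2]
          have hw0 : (∑ z : ↥S, w z * f t ↑z) = 0 := by
            have h0 : Φ w = 0 := LinearMap.mem_ker.mp hw
            exact congrFun h0 ⟨t, ht⟩
          rw [hw0, mul_zero]
        rw [e0, e1, add_zero]
        simp only [Finset.sum_apply, Pi.smul_apply, smul_eq_mul]
        apply Finset.sum_congr rfl
        intro t _
        rw [Finset.sum_mul]
      rw [hcomp]
      apply Submodule.sum_mem
      intro t _
      apply Submodule.smul_mem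
      apply Submodule.subset_span
      simp only [Finset.coe_image, Set.mem_image, Finset.mem_coe]
      exact ⟨↑t, t.2, rfl⟩
    have hconst : ∀ x : X, (![x, x] : Fin 2 → X) = fun _ => x := by
      intro x; funext j; fin_cases j <;> simp
    have hinj : ∀ w ∈ LinearMap.ker Φ, Ψ w = 0 → w = 0 := by
      intro w hw h0
      funext z'
      have h1 : Ψ w ↑z' = 0 := congrFun h0 ↑z'
      have h2 : Ψ w ↑z' = T ![(↑z' : X), ↑z'] * w z' := by
        show (∑ z : ↥S, T ![(↑z' : X), ↑z] * w z) = _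
        apply Finset.sum_eq_single_of_mem z' (Finset.mem_univ z')
        intro z _ hne
        have hz : T ![(↑z' : X), ↑z] = 0 := by
          apply hoff
          exact ⟨0, 1, by
            simp only [Matrix.cons_val_zero, Matrix.cons_val_one, Matrix.head_cons]
            exact fun h => hne (Subtype.ext h.symm)⟩
        rw [hz, zero_mul]
      rw [h1] at h2
      rw [hconst] at h2
      have := hdiag ↑z' z'.2
      exact (mul_eq_zero.mp h2.symm).resolve_left this
    let Ψ' : ↥(LinearMap.ker Φ) →ₗ[K] (X → K) := Ψ.comp (Submodule.subtype _)
    have hinj' : Function.Injective Ψ' := by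
      intro u v huv
      have h0 : Ψ ((u : ↥S → K) - ↑v) = 0 := by
        rw [map_sub, sub_eq_zero]; exact huv
      have := hinj _ (Submodule.sub_mem _ u.2 v.2) h0
      exact Subtype.ext (sub_eq_zero.mp this)
    have hr1 : Module.finrank K (LinearMap.ker Φ) ≤ Module.finrank K V := by
      rw [← LinearMap.finrank_range_of_inj hinj']
      apply Submodule.finrank_mono
      rintro _ ⟨w, rfl⟩
      exact hmem ↑w w.2
    have hr3 : Module.finrank K V ≤ s₀.card :=
      (finrank_span_finset_le_card _).trans (Finset.card_image_le)
    have hcards : s₀.card + s₁.card = s.card :=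
      Finset.card_filter_add_card_filter_not _
    omega
  | succ m hm IH =>
    rcases S.eq_empty_or_nonempty with rfl | hS
    · simp
    obtain ⟨x₀, hx₀S⟩ := hS
    have hm0 : (0:ℕ) < m := by omega
    set z₁ : ↥S := ⟨x₀, hx₀S⟩ with hz₁
    set sn : (Fin m → X) → X → (Fin (m+1) → X) := fun y z => Fin.snoc y z with hsn
    set slast := s.filter (fun t => idx t = Fin.last m) with hslast
    set srest := s.filter (fun t => ¬ idx t = Fin.last m) with hsrest
    set Φ : (↥S → K) →ₗ[K] (↥slast → K) :=
      { toFun := fun w t => ∑ z, w z * f ↑t ↑z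
        map_add' := fun u v => by funext t; simp [add_mul, Finset.sum_add_distrib]
        map_smul' := fun c u => by funext t; simp [Finset.mul_sum, mul_assoc] } with hΦ
    have hrank : S.card ≤ Module.finrank K (LinearMap.ker Φ) + slast.card := by
      have h1 := LinearMap.finrank_range_add_finrank_ker Φ
      have h2 : Module.finrank K (LinearMap.range Φ) ≤ slast.card := by
        calc Module.finrank K (LinearMap.range Φ) ≤ Module.finrank K (↥slast → K) :=
              Submodule.finrank_le _
          _ = slast.card := by rw [Module.finrank_fintype_fun_eq_card, Fintype.card_coe]
      have h3 : Module.finrank K (↥S → K) = S.card := by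
        rw [Module.finrank_fintype_fun_eq_card, Fintype.card_coe]
      omega
    obtain ⟨h, hhW, hhsupp⟩ := exists_large_support (LinearMap.ker Φ)
    set S' : Finset X := (Finset.univ.filter (fun y : ↥S => h y ≠ 0)).image Subtype.val
      with hS'
    have hS'card : Module.finrank K (LinearMap.ker Φ) ≤ S'.card := by
      rw [hS', Finset.card_image_of_injective _ Subtype.val_injective]; exact hhsupp
    set idx' : ι → Fin m := fun t =>
      if htl : idx t = Fin.last m then ⟨0, hm0⟩ else (idx t).castPred htl with hidx'
    set g' : ι → (Fin m → X) → K :=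
      fun t y => ∑ z : ↥S, g t (sn y ↑z) * h z with hg'def
    set T' : (Fin m → X) → K := fun y => ∑ z : ↥S, T (sn y ↑z) * h z with hT'def
    have hcast : ∀ t, ¬ idx t = Fin.last m → Fin.castSucc (idx' t) = idx t := by
      intro t htl
      rw [hidx']
      simp only [dif_neg htl]
      exact Fin.castSucc_castPred _ _
    have hgdep' : ∀ t ∈ srest, ∀ y y' : Fin m → X,
        (∀ j, j ≠ idx' t → y j = y' j) → g' t y = g' t y' := by
      intro t ht y y' hyy
      have hts : t ∈ s := (Finset.mem_filter.mp ht).1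
      have htl : ¬ idx t = Fin.last m := (Finset.mem_filter.mp ht).2
      rw [hg'def]
      apply Finset.sum_congr rfl
      intro z _
      congr 1
      apply hg t hts
      intro j hj
      rcases Fin.eq_castSucc_or_eq_last j with ⟨j₀, rfl⟩ | rfl
      · simp only [hsn, Fin.snoc_castSucc]
        apply hyy
        intro hj0
        apply hj
        rw [hj0, hcast t htl]
      · simp only [hsn, Fin.snoc_last]
    have hT'eq : ∀ y, T' y = ∑ t ∈ srest, f t (y (idx' t)) * g' t y := by
      intro y
      show (∑ z : ↥S, T (sn y ↑z) * h z) = _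
      have step1 : ∑ z : ↥S, T (sn y ↑z) * h z
          = ∑ t ∈ s, ∑ z : ↥S, f t (sn y ↑z (idx t)) * g t (sn y ↑z) * h z := by
        rw [Finset.sum_comm]
        exact Finset.sum_congr rfl fun z _ => by rw [hT, Finset.sum_mul]
      rw [step1, ← Finset.sum_filter_add_sum_filter_not s (fun t => idx t = Fin.last m)]
      have elast : ∑ t ∈ slast, ∑ z : ↥S,
          f t (sn y ↑z (idx t)) * g t (sn y ↑z) * h z = 0 := by
        apply Finset.sum_eq_zero
        intro t ht
        have hidx : idx t = Fin.last m := (Finset.mem_filter.mp ht).2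
        have hts : t ∈ s := (Finset.mem_filter.mp ht).1
        have e2 : ∑ z : ↥S, f t (sn y ↑z (idx t)) * g t (sn y ↑z) * h z
            = g t (sn y ↑z₁) * ∑ z : ↥S, h z * f t ↑z := by
          rw [Finset.mul_sum]
          apply Finset.sum_congr rfl
          intro z _
          have h1 : sn y ↑z (idx t) = ↑z := by rw [hidx]; simp [hsn]
          have hgz : g t (sn y ↑z) = g t (sn y ↑z₁) := by
            apply hg t hts
            intro j hj
            rcases Fin.eq_castSucc_or_eq_last j with ⟨j₀, rfl⟩ | rfl
            · simp only [hsn, Fin.snoc_castSucc]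
            · rw [hidx] at hj; exact absurd rfl hj
          rw [h1, hgz]
          ring
        rw [e2]
        have hw0 : (∑ z : ↥S, h z * f t ↑z) = 0 := by
          have h0 : Φ h = 0 := LinearMap.mem_ker.mp hhW
          exact congrFun h0 ⟨t, ht⟩
        rw [hw0, mul_zero]
      have erest : ∑ t ∈ srest, ∑ z : ↥S,
          f t (sn y ↑z (idx t)) * g t (sn y ↑z) * h z
          = ∑ t ∈ srest, f t (y (idx' t)) * g' t y := by
        apply Finset.sum_congr rfl
        intro t ht
        have htl : ¬ idx t = Fin.last m := (Finset.mem_filter.mp ht).2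
        have h1 : ∀ z : X, sn y z (idx t) = y (idx' t) := by
          intro z
          simp only [hsn]
          rw [← hcast t htl, Fin.snoc_castSucc]
        rw [hg'def, Finset.mul_sum]
        apply Finset.sum_congr rfl
        intro z _
        rw [h1]
        ring
      rw [elast, erest, zero_add]
    have hdiag' : ∀ x ∈ S', T' (fun _ => x) ≠ 0 := by
      intro x hx
      rw [hS'] at hx
      obtain ⟨y₀, hy₀f, rfl⟩ := Finset.mem_image.mp hx
      have hy₀ne : h y₀ ≠ 0 := (Finset.mem_filter.mp hy₀f).2
      have hconst : sn (fun _ : Fin m => (↑y₀ : X)) (↑y₀ : X) = fun _ => (↑y₀ : X) := by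
        funext j
        rcases Fin.eq_castSucc_or_eq_last j with ⟨j₀, rfl⟩ | rfl
        · simp only [hsn, Fin.snoc_castSucc]
        · simp only [hsn, Fin.snoc_last]
      have hres : T' (fun _ => (↑y₀ : X)) = T (fun _ => (↑y₀ : X)) * h y₀ := by
        show (∑ z : ↥S, T (sn (fun _ => (↑y₀ : X)) ↑z) * h z) = _
        rw [Finset.sum_eq_single_of_mem y₀ (Finset.mem_univ _)]
        · rw [hconst]
        · intro z _ hne
          have hz : T (sn (fun _ => (↑y₀ : X)) ↑z) = 0 := by
            apply hoff
            refine ⟨Fin.castSucc ⟨0, hm0⟩, Fin.last m, ?_⟩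
            simp only [hsn, Fin.snoc_castSucc, Fin.snoc_last]
            exact fun hcon => hne (Subtype.ext hcon.symm)
          rw [hz, zero_mul]
      rw [hres]
      exact mul_ne_zero (hdiag ↑y₀ y₀.2) hy₀ne
    have hoff' : ∀ y : Fin m → X, (∃ i j, y i ≠ y j) → T' y = 0 := by
      rintro y ⟨i, j, hij⟩
      rw [hT'def]
      apply Finset.sum_eq_zero
      intro z _
      have hz : T (sn y ↑z) = 0 := by
        apply hoff
        exact ⟨Fin.castSucc i, Fin.castSucc j, by
          simp only [hsn, Fin.snoc_castSucc]; exact hij⟩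
      rw [hz, zero_mul]
    have hIH := IH srest idx' f g' hgdep' T' hT'eq S' hdiag' hoff'
    have hcards : slast.card + srest.card = s.card :=
      Finset.card_filter_add_card_filter_not _
    omega

lemma pow_red_eq (p : ℕ) (hp : p.Prime) (x : ZMod p) (e : ℕ) :
    x ^ (if e = 0 then 0 else (e - 1) % (p - 1) + 1) = x ^ e := by
  haveI := Fact.mk hp
  rcases eq_or_ne e 0 with rfl | he
  · simp
  rw [if_neg he]
  rcases eq_or_ne x 0 with rfl | hx
  · rw [zero_pow (by omega), zero_pow he]
  · have h1 : x ^ (p - 1) = 1 := ZMod.pow_card_sub_one_eq_one hx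
    have h2 : x ^ (e - 1) = x ^ ((e - 1) % (p - 1)) := by
      conv_lhs => rw [← Nat.div_add_mod (e - 1) (p - 1)]
      rw [pow_add, pow_mul, h1, one_pow, one_mul]
    calc x ^ ((e - 1) % (p - 1) + 1) = x ^ ((e - 1) % (p - 1)) * x := by rw [pow_succ]
      _ = x ^ (e - 1) * x := by rw [h2]
      _ = x ^ e := by rw [← pow_succ]; congr 1; omega


theorem petrov_bound (p : ℕ) (hp : p.Prime) (m : ℕ) (hm : 1 ≤ m) (n : ℕ)
    (a : Fin m → ZMod p) (hsum : ∑ i, a i = 0) (ham : a ⟨m - 1, by omega⟩ ≠ 0)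
    (F : Finset (Fin n → ZMod p))
    (hF : ∀ b : Fin m → (Fin n → ZMod p), (∀ i, b i ∈ F) →
      (∃ i j : Fin m, i < j ∧ b i ≠ b j) → ∑ i, a i • b i ≠ 0) :
    F.card ≤ m * (Finset.univ.filter
      (fun α : Fin n → Fin p =>
        ((∑ i, (α i : ℕ) : ℕ) : ℝ) ≤ (n : ℝ) * ((p : ℝ) - 1) / m)).card := by
  classical
  haveI := Fact.mk hp
  have hp2 : 2 ≤ p := hp.two_le
  rcases eq_or_lt_of_le hm with hm1 | hm2
  · -- m = 1 : hypotheses are contradictory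
    exfalso
    subst hm1
    apply ham
    have : a ⟨1 - 1, by omega⟩ = a 0 := rfl
    rw [this, ← hsum, Fin.sum_univ_one]
  rcases F.eq_empty_or_nonempty with rfl | hF0
  · simp
  obtain ⟨x₀, hx₀⟩ := hF0
  haveI : Nonempty ↥F := ⟨⟨x₀, hx₀⟩⟩
  set A : Finset (Fin n → Fin p) := Finset.univ.filter
      (fun α : Fin n → Fin p =>
        ((∑ i, (α i : ℕ) : ℕ) : ℝ) ≤ (n : ℝ) * ((p : ℝ) - 1) / m) with hA
  set s : Finset (Fin m × (Fin n → Fin p)) := Finset.univ ×ˢ A with hs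
  -- the polynomial
  set Tp : MvPolynomial (Fin m × Fin n) (ZMod p) :=
    ∏ j : Fin n, (1 - (∑ i : Fin m, MvPolynomial.C (a i) * MvPolynomial.X (i, j)) ^ (p - 1))
    with hTp
  have hdeg : Tp.totalDegree ≤ n * (p - 1) := by
    calc Tp.totalDegree
        ≤ ∑ j : Fin n, (1 - (∑ i : Fin m,
            MvPolynomial.C (a i) * MvPolynomial.X (i, j)) ^ (p - 1)).totalDegree :=
          MvPolynomial.totalDegree_finset_prod _ _
      _ ≤ ∑ _j : Fin n, (p - 1) := by
          apply Finset.sum_le_sum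
          intro j _
          have hH : (∑ i : Fin m,
              MvPolynomial.C (a i) * MvPolynomial.X ((i, j) : Fin m × Fin n)).totalDegree ≤ 1 := by
            apply (MvPolynomial.totalDegree_finset_sum _ _).trans
            apply Finset.sup_le
            intro i _
            calc (MvPolynomial.C (a i) * MvPolynomial.X ((i, j) : Fin m × Fin n)).totalDegree
                ≤ (MvPolynomial.C (a i)).totalDegree
                  + (MvPolynomial.X ((i, j) : Fin m × Fin n) :
                      MvPolynomial (Fin m × Fin n) (ZMod p)).totalDegree :=
                  MvPolynomial.totalDegree_mul _ _
              _ ≤ 1 := by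
                  rw [MvPolynomial.totalDegree_C, MvPolynomial.totalDegree_X]
          calc (1 - (∑ i : Fin m,
              MvPolynomial.C (a i) * MvPolynomial.X ((i, j) : Fin m × Fin n)) ^ (p - 1)).totalDegree
              ≤ max (1 : MvPolynomial (Fin m × Fin n) (ZMod p)).totalDegree
                ((∑ i : Fin m, MvPolynomial.C (a i)
                  * MvPolynomial.X ((i, j) : Fin m × Fin n)) ^ (p - 1)).totalDegree :=
                MvPolynomial.totalDegree_sub _ _
            _ ≤ (p - 1) := by
                rw [MvPolynomial.totalDegree_one]
                simp only [max_le_iff]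
                refine ⟨Nat.zero_le _, ?_⟩
                calc ((∑ i : Fin m, MvPolynomial.C (a i)
                    * MvPolynomial.X ((i, j) : Fin m × Fin n)) ^ (p - 1)).totalDegree
                    ≤ (p - 1) * (∑ i : Fin m, MvPolynomial.C (a i)
                      * MvPolynomial.X ((i, j) : Fin m × Fin n)).totalDegree :=
                      MvPolynomial.totalDegree_pow _ _
                  _ ≤ (p - 1) * 1 := Nat.mul_le_mul_left _ hH
                  _ = p - 1 := by ring
      _ = n * (p - 1) := by rw [Finset.sum_const, Finset.card_univ, Fintype.card_fin, smul_eq_mul]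
  -- degree sums of monomials in the support
  have hβsum : ∀ β ∈ Tp.support, ∑ i : Fin m, ∑ j : Fin n, β (i, j) ≤ n * (p - 1) := by
    intro β hβ
    have h1 : (∑ x ∈ β.support, β x) ≤ Tp.totalDegree := MvPolynomial.le_totalDegree hβ
    have h2 : ∑ x ∈ β.support, β x = ∑ x : Fin m × Fin n, β x :=
      Finset.sum_subset (Finset.subset_univ _) (fun x _ hx => Finsupp.notMem_support_iff.mp hx)
    have h3 : ∑ x : Fin m × Fin n, β x = ∑ i : Fin m, ∑ j : Fin n, β (i, j) :=
      Fintype.sum_prod_type _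
    omega
  have hch : ∀ β ∈ Tp.support, ∃ i : Fin m, (∑ j : Fin n, β (i, j)) * m ≤ n * (p - 1) := by
    intro β hβ
    by_contra hcon
    push_neg at hcon
    have h1 : ∑ _i : Fin m, (n * (p - 1) + 1) ≤ ∑ i : Fin m, (∑ j : Fin n, β (i, j)) * m :=
      Finset.sum_le_sum fun i _ => hcon i
    rw [Finset.sum_const, Finset.card_univ, Fintype.card_fin, smul_eq_mul, ← Finset.sum_mul] at h1
    have h2 := hβsum β hβ
    have h3 : (∑ i : Fin m, ∑ j : Fin n, β (i, j)) * m ≤ (n * (p - 1)) * m :=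
      Nat.mul_le_mul_right _ h2
    have h4 : m * (n * (p - 1) + 1) = m * (n * (p - 1)) + m := by ring
    have h5 : (n * (p - 1)) * m = m * (n * (p - 1)) := by ring
    omega
  set ch : ((Fin m × Fin n) →₀ ℕ) → Fin m := fun β =>
    if hb : ∃ i : Fin m, (∑ j : Fin n, β (i, j)) * m ≤ n * (p - 1) then hb.choose
    else ⟨0, by omega⟩ with hchdef
  set red : ℕ → ℕ := fun e => if e = 0 then 0 else (e - 1) % (p - 1) + 1 with hreddef
  have hredlt : ∀ e, red e < p := by
    intro e
    rw [hreddef]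
    dsimp only
    split
    · omega
    · have := Nat.mod_lt (e - 1) (show 0 < p - 1 by omega)
      omega
  have hredle : ∀ e, red e ≤ e := by
    intro e
    rw [hreddef]
    dsimp only
    split
    · omega
    · have := Nat.mod_le (e - 1) (p - 1)
      omega
  set key : ((Fin m × Fin n) →₀ ℕ) → Fin m × (Fin n → Fin p) := fun β =>
    (ch β, fun j => ⟨red (β (ch β, j)), hredlt _⟩) with hkeydef
  have hkey_mem : ∀ β ∈ Tp.support, key β ∈ s := by
    intro β hβ
    rw [hs, Finset.mem_product]
    refine ⟨Finset.mem_univ _, ?_⟩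
    rw [hA, Finset.mem_filter]
    refine ⟨Finset.mem_univ _, ?_⟩
    have hchle : (∑ j : Fin n, β (ch β, j)) * m ≤ n * (p - 1) := by
      rw [hchdef]
      dsimp only
      rw [dif_pos (hch β hβ)]
      exact (hch β hβ).choose_spec
    have hle : (∑ j : Fin n, ((key β).2 j : ℕ)) ≤ ∑ j : Fin n, β (ch β, j) := by
      apply Finset.sum_le_sum
      intro j _
      calc ((key β).2 j : ℕ) = red (β (ch β, j)) := rfl
        _ ≤ β (ch β, j) := hredle _
    have hnat : (∑ j : Fin n, ((key β).2 j : ℕ)) * m ≤ n * (p - 1) :=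
      le_trans (Nat.mul_le_mul_right _ hle) hchle
    have hm0 : (0 : ℝ) < m := by positivity
    rw [le_div_iff₀ hm0]
    have hcast : (n : ℝ) * ((p : ℝ) - 1) = ((n * (p - 1) : ℕ) : ℝ) := by
      have : ((p : ℝ) - 1) = ((p - 1 : ℕ) : ℝ) := by
        rw [Nat.cast_sub (by omega)]
        simp
      rw [this]
      push_cast
      ring
    rw [hcast]
    exact_mod_cast hnat
  -- evaluation and slice decomposition
  set v : (Fin m → ↥F) → (Fin m × Fin n) → ZMod p :=
    fun b ij => (↑(b ij.1) : Fin n → ZMod p) ij.2 with hv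
  set T : (Fin m → ↥F) → ZMod p := fun b => MvPolynomial.eval (v b) Tp with hT
  set f : (Fin m × (Fin n → Fin p)) → ↥F → ZMod p :=
    fun t x => ∏ j : Fin n, (↑x : Fin n → ZMod p) j ^ ((t.2 j : ℕ)) with hf
  set g : (Fin m × (Fin n → Fin p)) → (Fin m → ↥F) → ZMod p :=
    fun t b => ∑ β ∈ Tp.support.filter (fun β => key β = t),
      MvPolynomial.coeff β Tp * ∏ i ∈ Finset.univ.erase t.1, ∏ j : Fin n,
        (↑(b i) : Fin n → ZMod p) j ^ (β (i, j)) with hgdef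
  have hg : ∀ t ∈ s, ∀ x y : Fin m → ↥F, (∀ j, j ≠ t.1 → x j = y j) → g t x = g t y := by
    intro t _ x y hxy
    rw [hgdef]
    dsimp only
    apply Finset.sum_congr rfl
    intro β _
    congr 1
    apply Finset.prod_congr rfl
    intro i hi
    rw [hxy i (Finset.mem_erase.mp hi).1]
  have hTeq : ∀ b, T b = ∑ t ∈ s, f t (b t.1) * g t b := by
    intro b
    have lhs : T b = ∑ β ∈ Tp.support,
        MvPolynomial.coeff β Tp * ∏ ij : Fin m × Fin n, v b ij ^ β ij :=
      MvPolynomial.eval_eq' (v b) Tp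
    have fib := Finset.sum_fiberwise_of_maps_to hkey_mem
      (fun β => MvPolynomial.coeff β Tp * ∏ ij : Fin m × Fin n, v b ij ^ β ij)
    rw [lhs, ← fib]
    apply Finset.sum_congr rfl
    intro t ht
    rw [hgdef]
    dsimp only
    rw [Finset.mul_sum]
    apply Finset.sum_congr rfl
    intro β hβf
    obtain ⟨hβs, hβk⟩ := Finset.mem_filter.mp hβf
    subst hβk
    have hprod : ∏ ij : Fin m × Fin n, v b ij ^ β ij
        = (∏ j : Fin n, (↑(b (key β).1) : Fin n → ZMod p) j ^ β ((key β).1, j))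
          * ∏ i ∈ Finset.univ.erase (key β).1, ∏ j : Fin n,
            (↑(b i) : Fin n → ZMod p) j ^ β (i, j) := by
      rw [Fintype.prod_prod_type]
      exact (Finset.mul_prod_erase Finset.univ
        (fun i => ∏ j : Fin n, (↑(b i) : Fin n → ZMod p) j ^ β (i, j))
        (Finset.mem_univ (key β).1)).symm
    have hfβ : f (key β) (b (key β).1)
        = ∏ j : Fin n, (↑(b (key β).1) : Fin n → ZMod p) j ^ β ((key β).1, j) := by
      rw [hf]
      dsimp only
      apply Finset.prod_congr rfl
      intro j _
      exact pow_red_eq p hp _ _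
    rw [hprod, hfβ]
    ring
  have hdiag : ∀ x : ↥F, x ∈ (Finset.univ : Finset ↥F) → T (fun _ => x) ≠ 0 := by
    intro x _
    have h1 : T (fun _ => x) = 1 := by
      rw [hT]
      dsimp only
      rw [hTp, map_prod]
      apply Finset.prod_eq_one
      intro j _
      rw [map_sub, map_pow, map_sum, map_one]
      simp only [map_mul, MvPolynomial.eval_C, MvPolynomial.eval_X]
      have h2 : ∑ i : Fin m, a i * v (fun _ => x) (i, j)
          = (∑ i : Fin m, a i) * (↑x : Fin n → ZMod p) j := by
        rw [Finset.sum_mul]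
      rw [h2, hsum, zero_mul, zero_pow (show p - 1 ≠ 0 by omega), sub_zero]
    rw [h1]
    exact one_ne_zero
  have hoff : ∀ b : Fin m → ↥F, (∃ i j, b i ≠ b j) → T b = 0 := by
    rintro b ⟨i, j, hij⟩
    set b' : Fin m → (Fin n → ZMod p) := fun i => ↑(b i) with hb'
    have hbF : ∀ i, b' i ∈ F := fun i => (b i).2
    have hne : ∃ i' j' : Fin m, i' < j' ∧ b' i' ≠ b' j' := by
      have hcne : b' i ≠ b' j := fun hc => hij (Subtype.ext hc)
      rcases lt_trichotomy i j with h | h | h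
      · exact ⟨i, j, h, hcne⟩
      · exact absurd h (fun hh => hij (by rw [hh]))
      · exact ⟨j, i, h, fun hc => hcne hc.symm⟩
    have hs0 := hF b' hbF hne
    have hj0 : ∃ j0 : Fin n, (∑ i : Fin m, a i * b' i j0) ≠ 0 := by
      by_contra hcon
      push_neg at hcon
      apply hs0
      funext j0
      rw [Finset.sum_apply]
      have : ∀ i : Fin m, (a i • b' i) j0 = a i * b' i j0 := fun i => rfl
      simp only [this]
      rw [hcon j0]
      rfl
    obtain ⟨j0, hj0⟩ := hj0
    rw [hT]
    dsimp only
    rw [hTp, map_prod]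
    apply Finset.prod_eq_zero (Finset.mem_univ j0)
    rw [map_sub, map_pow, map_sum, map_one]
    simp only [map_mul, MvPolynomial.eval_C, MvPolynomial.eval_X]
    have he : ∑ i : Fin m, a i * v b (i, j0) = ∑ i : Fin m, a i * b' i j0 := rfl
    rw [he, ZMod.pow_card_sub_one_eq_one hj0, sub_self]
  have hfin := slice_rank_diag m hm2 s Prod.fst f g hg T hTeq Finset.univ hdiag hoff
  have hcard1 : (Finset.univ : Finset ↥F).card = F.card := by
    rw [Finset.card_univ, Fintype.card_coe]
  have hcard2 : s.card = m * A.card := by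
    rw [hs, Finset.card_product, Finset.card_univ, Fintype.card_fin]
  rw [hcard1, hcard2] at hfin
  exact hfin
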